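/- There exist shrinking sequences σ and τ such that: both (2^ℕ, d_σ) and (2^ℕ, d_τ) are doubling, uniformly disconnected, and not uniformly perfect (i.e., have type (1,1,0)); and the ℓ^∞-product metric space (2^ℕ × 2^ℕ, d_σ × d_τ), where (d_σ × d_τ)((x,y),(x',y')) = max{d_σ(x,x'), d_τ(y,y')}, is quasi-symmetrically equivalent to the middle-third Cantor set Γ with the metric induced from ℝ. -/

import Mathlib

open Metric Set
open scoped ENNReal NNReal

noncomputable section

/-- A metric space is doubling if there is `N` such that every closed ball of radius `r`
can be covered by at most `N` closed balls of radius `r / 2`. -/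
def IsDoubling (X : Type*) [MetricSpace X] : Prop :=
  ∃ N : ℕ, ∀ (x : X) (r : ℝ), ∃ c : Finset X, c.card ≤ N ∧
    Metric.closedBall x r ⊆ ⋃ y ∈ c, Metric.closedBall y (r / 2)

/-- Every `δ`-chain is trivial (constant). -/
def IsUniformlyDisconnectedWith (X : Type*) [MetricSpace X] (δ : ℝ) : Prop :=
  ∀ (N : ℕ) (x : ℕ → X),
    (∀ i : ℕ, 1 ≤ i → i ≤ N → dist (x (i - 1)) (x i) ≤ δ * dist (x 0) (x N)) →
    ∀ i ≤ N, x i = x 0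

def IsUniformlyDisconnected (X : Type*) [MetricSpace X] : Prop :=
  ∃ δ : ℝ, 0 < δ ∧ δ < 1 ∧ IsUniformlyDisconnectedWith X δ

/-- `ρ`-uniform perfectness. -/
def IsUniformlyPerfectWith (X : Type*) [MetricSpace X] (ρ : ℝ) : Prop :=
  ∀ (x : X) (r : ℝ), 0 < r → r < Metric.diam (Set.univ : Set X) →
    (Metric.closedBall x r \ Metric.ball x (ρ * r)).Nonempty

def IsUniformlyPerfect (X : Type*) [MetricSpace X] : Prop :=
  ∃ ρ : ℝ, 0 < ρ ∧ ρ ≤ 1 ∧ IsUniformlyPerfectWith X ρ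

/-- A metric space has type `(u, v, w) ∈ {0,1}³` (here encoded by `Bool`s) if `u = 1` exactly
when it is doubling, `v = 1` exactly when it is uniformly disconnected, and `w = 1` exactly
when it is uniformly perfect. -/
def HasType (X : Type*) [MetricSpace X] (u v w : Bool) : Prop :=
  (IsDoubling X ↔ u = true) ∧ (IsUniformlyDisconnected X ↔ v = true) ∧
    (IsUniformlyPerfect X ↔ w = true)

/-- `S_D`: points having no doubling neighborhood. -/
def SD (X : Type*) [MetricSpace X] : Set X :=
  {x : X | ∀ s ∈ nhds x, ¬ IsDoubling ↥s}

/-- `S_UD`: points having no uniformly disconnected neighborhood. -/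
def SUD (X : Type*) [MetricSpace X] : Set X :=
  {x : X | ∀ s ∈ nhds x, ¬ IsUniformlyDisconnected ↥s}

/-- `S_UP`: points having no uniformly perfect neighborhood. -/
def SUP (X : Type*) [MetricSpace X] : Set X :=
  {x : X | ∀ s ∈ nhds x, ¬ IsUniformlyPerfect ↥s}

/-- The ternary correspondence map `T(x) = Σ_{i≥1} 2 x_i / 3^i` (indices shifted to start
at `0`). -/
def cantorT (x : ℕ → Bool) : ℝ :=
  ∑' i : ℕ, 2 * (if x i then (1 : ℝ) else 0) / 3 ^ (i + 1)

/-- A Cantor space: a topological space homeomorphic to the middle-third Cantor set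
(`cantorSet` is Mathlib's middle-third Cantor set in `ℝ`). -/
def IsCantorSpace (X : Type*) [TopologicalSpace X] : Prop :=
  Nonempty (X ≃ₜ ↥cantorSet)

/-- The first index at which `x` and `y` differ. -/
def seqV (x y : ℕ → Bool) : ℕ := sInf {n | x n ≠ y n}

-- The standard ultrametric `e(x,y) = 3^{-(v(x,y)+1)}` on `2^ℕ` (indices starting at `0`,
-- corresponding to `3^{-min{n ≥ 1 : x_n ≠ y_n}}` with indices starting at `1`).
open Classical in
def cantorE (x y : ℕ → Bool) : ℝ :=
  if x = y then 0 else (3 : ℝ)⁻¹ ^ (seqV x y + 1)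

/-- A shrinking sequence: positive, non-increasing, converging to `0`. -/
def IsShrinking (α : ℕ → ℝ) : Prop :=
  (∀ n, 0 < α n) ∧ (∀ m n : ℕ, m ≤ n → α n ≤ α m) ∧
    Filter.Tendsto α Filter.atTop (nhds 0)

-- The distance `d_α(x,y) = α (v(x,y))` associated with a sequence `α`.
open Classical in
def seqDist (α : ℕ → ℝ) (x y : ℕ → Bool) : ℝ :=
  if x = y then 0 else α (seqV x y)

lemma seqV_comm (x y : ℕ → Bool) : seqV x y = seqV y x := by
  unfold seqV
  congr 1
  ext n
  exact ne_comm

lemma seqDist_self (α : ℕ → ℝ) (x : ℕ → Bool) : seqDist α x x = 0 := by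
  rw [seqDist, if_pos rfl]

lemma seqDist_of_ne (α : ℕ → ℝ) {x y : ℕ → Bool} (h : x ≠ y) :
    seqDist α x y = α (seqV x y) := by
  rw [seqDist, if_neg h]

lemma seqDist_nonneg {α : ℕ → ℝ} (hα : ∀ n, 0 < α n) (x y : ℕ → Bool) :
    0 ≤ seqDist α x y := by
  rcases eq_or_ne x y with h | h
  · rw [h, seqDist_self]
  · rw [seqDist_of_ne α h]
    exact (hα _).le

lemma min_seqV_le {x y z : ℕ → Bool} (hxz : x ≠ z) :
    min (seqV x y) (seqV y z) ≤ seqV x z := by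
  have hne : {n | x n ≠ z n}.Nonempty := by
    rcases Function.ne_iff.mp hxz with ⟨n, hn⟩
    exact ⟨n, hn⟩
  have hmem : x (seqV x z) ≠ z (seqV x z) := Nat.sInf_mem hne
  rcases ne_or_eq (x (seqV x z)) (y (seqV x z)) with h | h
  · exact le_trans (min_le_left _ _) (Nat.sInf_le h)
  · have h' : y (seqV x z) ≠ z (seqV x z) := by rw [← h]; exact hmem
    exact le_trans (min_le_right _ _) (Nat.sInf_le h')

/-- The sequentially metrized Cantor space `(2^ℕ, d_α)` for a shrinking sequence `α`. -/
def seqMetricSpace (α : ℕ → ℝ) (hα : IsShrinking α) : MetricSpace (ℕ → Bool) where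
  dist := seqDist α
  dist_self x := seqDist_self α x
  dist_comm x y := by
    show seqDist α x y = seqDist α y x
    rcases eq_or_ne x y with h | h
    · rw [h]
    · rw [seqDist_of_ne α h, seqDist_of_ne α h.symm, seqV_comm]
  dist_triangle x y z := by
    show seqDist α x z ≤ seqDist α x y + seqDist α y z
    rcases eq_or_ne x z with hxz | hxz
    · rw [hxz, seqDist_self]
      exact add_nonneg (seqDist_nonneg hα.1 _ _) (seqDist_nonneg hα.1 _ _)
    rcases eq_or_ne x y with hxy | hxy
    · subst hxy
      rw [seqDist_self, zero_add]
    rcases eq_or_ne y z with hyz | hyz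
    · subst hyz
      rw [seqDist_self, add_zero]
    rw [seqDist_of_ne α hxz, seqDist_of_ne α hxy, seqDist_of_ne α hyz]
    have h1 : α (seqV x z) ≤ α (min (seqV x y) (seqV y z)) :=
      hα.2.1 _ _ (min_seqV_le hxz)
    rcases min_cases (seqV x y) (seqV y z) with ⟨he, _⟩ | ⟨he, _⟩
    · rw [he] at h1
      exact h1.trans (le_add_of_nonneg_right (hα.1 _).le)
    · rw [he] at h1
      exact h1.trans (le_add_of_nonneg_left (hα.1 _).le)
  eq_of_dist_eq_zero := by
    intro x y h
    by_contra hne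
    have h' : seqDist α x y = 0 := h
    rw [seqDist_of_ne α hne] at h'
    exact absurd h' (ne_of_gt (hα.1 _))

/-- The Assouad dimension of a metric space. -/
def assouadDim (X : Type*) [MetricSpace X] : ℝ≥0∞ :=
  sInf {d : ℝ≥0∞ | ∃ s : ℝ, 0 < s ∧ d = ENNReal.ofReal s ∧ ∃ K : ℝ, 0 < K ∧
    ∀ ε : ℝ, 0 < ε → ε < 2 → ∀ r : ℝ, 0 < r → ∀ x : X,
      ∃ c : Finset X, (c.card : ℝ) ≤ K * ε ^ (-s) ∧
        Metric.closedBall x r ⊆ ⋃ y ∈ c, Metric.closedBall y (ε * r)}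

/-- The Hausdorff dimension of (the whole of) a metric space. -/
def hausdorffDim (X : Type*) [MetricSpace X] : ℝ≥0∞ := dimH (Set.univ : Set X)

/-- The topology induced by a metric. -/
def metricTopology {X : Type*} (m : MetricSpace X) : TopologicalSpace X :=
  m.toPseudoMetricSpace.toUniformSpace.toTopologicalSpace

/-- `f : X → Y` is quasi-symmetric: for some self-homeomorphism `η` of `[0,∞)`,
`d(f x, f y)/d(f x, f z) ≤ η (d(x,y)/d(x,z))` for all distinct `x, y, z`. -/
def IsQuasiSymmetric {X Y : Type*} [MetricSpace X] [MetricSpace Y] (f : X → Y) : Prop :=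
  ∃ η : Homeomorph (Set.Ici (0 : ℝ)) (Set.Ici (0 : ℝ)),
    ∀ x y z : X, x ≠ y → x ≠ z → y ≠ z →
      dist (f x) (f y) / dist (f x) (f z) ≤
        (η ⟨dist x y / dist x z, div_nonneg dist_nonneg dist_nonneg⟩ : ℝ)

/-- Two metric spaces (given by explicit metric structures) are quasi-symmetrically
equivalent if there is a quasi-symmetric homeomorphism between them. -/
def QSEquiv (X Y : Type*) (mX : MetricSpace X) (mY : MetricSpace Y) : Prop :=
  ∃ f : @Homeomorph X Y (metricTopology mX) (metricTopology mY),
    @IsQuasiSymmetric X Y mX mY f.toEquiv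


/-- The `ℓ^∞`-product metric (the sup metric) on `X × Y`. -/
def prodMetric {X Y : Type*} (mX : MetricSpace X) (mY : MetricSpace Y) :
    MetricSpace (X × Y) :=
  letI := mX; letI := mY; Prod.metricSpaceMax

namespace S17

lemma seqV_spec {x y : ℕ → Bool} (h : x ≠ y) : x (seqV x y) ≠ y (seqV x y) := by
  have hne : {n | x n ≠ y n}.Nonempty := by
    rcases Function.ne_iff.mp h with ⟨n, hn⟩
    exact ⟨n, hn⟩
  exact Nat.sInf_mem hne

lemma seqV_min {x y : ℕ → Bool} {i : ℕ} (h : i < seqV x y) : x i = y i := by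
  by_contra hne
  have h2 : seqV x y ≤ i := Nat.sInf_le (show i ∈ {n | x n ≠ y n} from hne)
  omega

lemma le_seqV {x y : ℕ → Bool} {k : ℕ} (hne : x ≠ y) (h : ∀ i < k, x i = y i) :
    k ≤ seqV x y := by
  by_contra hlt
  push_neg at hlt
  exact seqV_spec hne (h _ hlt)

lemma seqV_le {x y : ℕ → Bool} {i : ℕ} (h : x i ≠ y i) : seqV x y ≤ i :=
  Nat.sInf_le (show i ∈ {n | x n ≠ y n} from h)

lemma seqDist_le_head {α : ℕ → ℝ} (hα : IsShrinking α) (x y : ℕ → Bool) :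
    seqDist α x y ≤ α 0 := by
  rcases eq_or_ne x y with rfl | h
  · rw [seqDist_self]; exact (hα.1 0).le
  · rw [seqDist_of_ne α h]; exact hα.2.1 0 _ (Nat.zero_le _)

lemma seqDist_ultra {α : ℕ → ℝ} (hα : IsShrinking α) (x y z : ℕ → Bool) :
    seqDist α x z ≤ max (seqDist α x y) (seqDist α y z) := by
  rcases eq_or_ne x z with rfl | hxz
  · rw [seqDist_self]
    exact le_max_of_le_left (seqDist_nonneg hα.1 _ _)
  rcases eq_or_ne x y with rfl | hxy
  · rw [seqDist_self]
    exact le_max_right _ _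
  rcases eq_or_ne y z with rfl | hyz
  · rw [seqDist_self]
    exact le_max_left _ _
  rw [seqDist_of_ne α hxz, seqDist_of_ne α hxy, seqDist_of_ne α hyz]
  have h1 : α (seqV x z) ≤ α (min (seqV x y) (seqV y z)) :=
    hα.2.1 _ _ (min_seqV_le hxz)
  rcases min_cases (seqV x y) (seqV y z) with ⟨he, _⟩ | ⟨he, _⟩
  · rw [he] at h1; exact le_max_of_le_left h1
  · rw [he] at h1; exact le_max_of_le_right h1

section Instance

variable (α : ℕ → ℝ) (hα : IsShrinking α)

lemma seq_isDoubling (hstep : ∀ n, 3 * α (n + 1) ≤ α n) :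
    @IsDoubling (ℕ → Bool) (seqMetricSpace α hα) := by
  letI := seqMetricSpace α hα
  have hd : ∀ u v : ℕ → Bool, dist u v = seqDist α u v := fun _ _ => rfl
  classical
  refine ⟨2, fun x r => ?_⟩
  by_cases hr : 0 < r
  · have hex : ∃ n, α n ≤ r := by
      obtain ⟨n, hn⟩ := (hα.2.2.eventually_lt_const hr).exists
      exact ⟨n, hn.le⟩
    set k := Nat.find hex with hkdef
    have hk : α k ≤ r := Nat.find_spec hex
    have hk' : ∀ j, j < k → r < α j := fun j hj => lt_of_not_ge (Nat.find_min hex hj)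
    -- membership: small cylinder into half-radius ball
    have hmem : ∀ y z : ℕ → Bool, (∀ i < k + 1, z i = y i) → z ∈ closedBall y (r / 2) := by
      intro y z hagree
      rw [mem_closedBall, hd]
      rcases eq_or_ne z y with rfl | hne
      · rw [seqDist_self]; positivity
      · rw [seqDist_of_ne α hne]
        have h1 : k + 1 ≤ seqV z y := le_seqV hne hagree
        have h2 : α (seqV z y) ≤ α (k + 1) := hα.2.1 _ _ h1
        have h3 : α (k + 1) ≤ r / 3 := by
          have := hstep k; linarith
        linarith
    set x' := Function.update x k (!(x k)) with hx'
    refine ⟨{x, x'}, Finset.card_insert_le _ _ |>.trans (by simp), ?_⟩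
    intro z hz
    have hagree : ∀ i < k, z i = x i := by
      intro i hi
      rw [mem_closedBall, hd] at hz
      rcases eq_or_ne z x with rfl | hne
      · rfl
      · rw [seqDist_of_ne α hne] at hz
        by_contra hzi
        have h1 : seqV z x ≤ i := seqV_le hzi
        have h2 : r < α (seqV z x) := hk' _ (lt_of_le_of_lt h1 hi)
        linarith
    simp only [Set.mem_iUnion, Finset.mem_insert, Finset.mem_singleton]
    by_cases hzk : z k = x k
    · refine ⟨x, ?_⟩
      refine ⟨Or.inl rfl, hmem x z ?_⟩
      intro i hi
      rcases Nat.lt_succ_iff_lt_or_eq.mp hi with hi | rfl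
      · exact hagree i hi
      · exact hzk
    · refine ⟨x', ⟨Or.inr rfl, hmem x' z ?_⟩⟩
      intro i hi
      rcases Nat.lt_succ_iff_lt_or_eq.mp hi with hi | rfl
      · rw [hx', Function.update_of_ne (Nat.ne_of_lt hi)]
        exact hagree i hi
      · rw [hx', Function.update_self]
        cases hzz : z k <;> cases hxx : x k <;> simp_all
  · refine ⟨{x}, by simp, ?_⟩
    intro z hz
    simp only [Set.mem_iUnion, Finset.mem_singleton]
    exact ⟨x, rfl, closedBall_subset_closedBall (by linarith) hz⟩

lemma seq_isUD : @IsUniformlyDisconnected (ℕ → Bool) (seqMetricSpace α hα) := by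
  letI := seqMetricSpace α hα
  have hu : ∀ u v w : ℕ → Bool, dist u w ≤ max (dist u v) (dist v w) :=
    fun u v w => seqDist_ultra hα u v w
  refine ⟨1/2, by norm_num, by norm_num, ?_⟩
  intro N x hch
  have key : ∀ i ≤ N, dist (x 0) (x i) ≤ (1/2) * dist (x 0) (x N) := by
    intro i
    induction i with
    | zero => intro _; rw [dist_self]; positivity
    | succ n ih =>
      intro h
      refine (hu (x 0) (x n) (x (n+1))).trans (max_le (ih (by omega)) ?_)
      have := hch (n+1) (by omega) h
      simpa using this
  have hzero : dist (x 0) (x N) = 0 := by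
    rcases Nat.eq_zero_or_pos N with rfl | hN
    · exact dist_self _
    · have := key N le_rfl
      nlinarith [dist_nonneg (x := x 0) (y := x N)]
  intro i hi
  induction i with
  | zero => rfl
  | succ n ih =>
    have h1 := hch (n+1) (by omega) hi
    rw [hzero] at h1
    simp only [mul_zero, Nat.add_sub_cancel] at h1
    have h2 : x n = x (n+1) := dist_le_zero.mp h1
    rw [← h2]
    exact ih (by omega)

lemma seq_notUP (hgap : ∀ ε : ℝ, 0 < ε → ∃ n, α (n + 1) < ε * α n) :
    ¬ @IsUniformlyPerfect (ℕ → Bool) (seqMetricSpace α hα) := by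
  letI := seqMetricSpace α hα
  have hd : ∀ u v : ℕ → Bool, dist u v = seqDist α u v := fun _ _ => rfl
  rintro ⟨ρ, hρ0, hρ1, hUP⟩
  obtain ⟨n, hn⟩ := hgap (ρ/2) (by positivity)
  have hbdd : Bornology.IsBounded (Set.univ : Set (ℕ → Bool)) := by
    rw [Metric.isBounded_iff]
    exact ⟨α 0, fun u _ v _ => by rw [hd]; exact seqDist_le_head hα u v⟩
  have hdvals : dist (fun _ => false : ℕ → Bool) (fun _ => true) = α 0 := by
    rw [hd, seqDist_of_ne]
    · congr 1
      have : seqV (fun _ => false : ℕ → Bool) (fun _ => true) ≤ 0 := seqV_le (by simp)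
      omega
    · intro h; exact Bool.false_ne_true (congrFun h 0)
  have hdiam : α 0 ≤ Metric.diam (Set.univ : Set (ℕ → Bool)) := by
    rw [← hdvals]
    exact Metric.dist_le_diam_of_mem hbdd (Set.mem_univ _) (Set.mem_univ _)
  have hr0 : 0 < α n / 2 := by have := hα.1 n; positivity
  have hrd : α n / 2 < Metric.diam (Set.univ : Set (ℕ → Bool)) := by
    have h1 : α n ≤ α 0 := hα.2.1 0 n (Nat.zero_le _)
    have h2 : 0 < α 0 := hα.1 0
    linarith
  obtain ⟨y, hy1, hy2⟩ := hUP (fun _ => false) (α n / 2) hr0 hrd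
  rw [mem_closedBall, hd] at hy1
  apply hy2
  rw [mem_ball, hd]
  rcases eq_or_ne y (fun _ => false : ℕ → Bool) with rfl | hne
  · rw [seqDist_self]; positivity
  · rw [seqDist_of_ne α hne] at hy1 ⊢
    set v := seqV y (fun _ => false)
    have hvgt : n < v := by
      by_contra h
      push_neg at h
      have := hα.2.1 v n h
      have := hα.1 n
      linarith
    have h1 : α v ≤ α (n + 1) := hα.2.1 _ _ hvgt
    calc α v ≤ α (n+1) := h1
      _ < (ρ/2) * α n := hn
      _ = ρ * (α n / 2) := by ring
end Instance

end S17
namespace S17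

def pA (m : ℕ) : Prop := Even (Nat.log 2 (m + 1))

instance : DecidablePred pA := fun m => by unfold pA; infer_instance

def pB (m : ℕ) : Prop := ¬ pA m

instance : DecidablePred pB := fun m => by unfold pB; infer_instance

lemma log_block {k m : ℕ} (hk : 1 ≤ k) (h1 : 2 ^ k - 2 < m) (h2 : m + 1 < 2 ^ (k + 1)) :
    Nat.log 2 (m + 1) = k := by
  have hpk : 2 ≤ 2 ^ k := by
    calc 2 = 2 ^ 1 := rfl
    _ ≤ 2 ^ k := Nat.pow_le_pow_right (by norm_num) hk
  exact Nat.log_eq_of_pow_le_of_lt_pow (by omega) h2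

lemma pA_block_mem {C : ℕ} : pA (2 ^ (2 * C + 1) - 2) := by
  unfold pA
  have hpk : 2 ≤ 2 ^ (2 * C + 1) := by
    calc 2 = 2 ^ 1 := rfl
    _ ≤ 2 ^ (2 * C + 1) := Nat.pow_le_pow_right (by norm_num) (by omega)
  have h : 2 ^ (2 * C + 1) - 2 + 1 = 2 ^ (2 * C + 1) - 1 := by omega
  rw [h]
  have hlog : Nat.log 2 (2 ^ (2 * C + 1) - 1) = 2 * C := by
    apply Nat.log_eq_of_pow_le_of_lt_pow
    · have : 2 ^ (2 * C + 1) = 2 * 2 ^ (2 * C) := by rw [pow_succ]; ring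
      have h2 : 1 ≤ 2 ^ (2 * C) := Nat.one_le_two_pow
      omega
    · have : 2 ^ (2 * C + 1) ≥ 1 := Nat.one_le_two_pow
      omega
  rw [hlog]
  exact even_two_mul C

lemma pB_block_mem {C : ℕ} : pB (2 ^ (2 * C + 2) - 2) := by
  unfold pB pA
  have hpk : 2 ≤ 2 ^ (2 * C + 2) := by
    calc 2 = 2 ^ 1 := rfl
    _ ≤ 2 ^ (2 * C + 2) := Nat.pow_le_pow_right (by norm_num) (by omega)
  have h : 2 ^ (2 * C + 2) - 2 + 1 = 2 ^ (2 * C + 2) - 1 := by omega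
  rw [h]
  have hlog : Nat.log 2 (2 ^ (2 * C + 2) - 1) = 2 * C + 1 := by
    apply Nat.log_eq_of_pow_le_of_lt_pow
    · have : 2 ^ (2 * C + 2) = 2 * 2 ^ (2 * C + 1) := by rw [pow_succ]; ring
      have h2 : 2 ≤ 2 ^ (2 * C + 1) := by
        calc 2 = 2 ^ 1 := rfl
        _ ≤ 2 ^ (2 * C + 1) := Nat.pow_le_pow_right (by norm_num) (by omega)
      omega
    · rw [show 2 * C + 1 + 1 = 2 * C + 2 from rfl]
      have : 2 ^ (2 * C + 2) ≥ 1 := Nat.one_le_two_pow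
      omega
  rw [hlog]
  simp [Nat.even_add_one, parity_simps]

lemma pA_infinite : {m | pA m}.Infinite := by
  apply Set.infinite_of_injective_forall_mem (f := fun C : ℕ => 2 ^ (2 * C + 1) - 2) ?_ ?_
  · intro i j hij
    have : ∀ m n : ℕ, m < n → 2 ^ (2 * m + 1) - 2 < 2 ^ (2 * n + 1) - 2 := by
      intro m n hmn
      have h1 : 2 ^ (2 * m + 1) < 2 ^ (2 * n + 1) := Nat.pow_lt_pow_right (by norm_num) (by omega)
      have h2 : 2 ≤ 2 ^ (2 * m + 1) := by
        calc 2 = 2 ^ 1 := rfl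
        _ ≤ 2 ^ (2 * m + 1) := Nat.pow_le_pow_right (by norm_num) (by omega)
      omega
    rcases lt_trichotomy i j with h | h | h
    · exact absurd hij (Nat.ne_of_lt (this i j h))
    · exact h
    · exact absurd hij.symm (Nat.ne_of_lt (this j i h))
  · intro C
    exact pA_block_mem

lemma pB_infinite : {m | pB m}.Infinite := by
  apply Set.infinite_of_injective_forall_mem (f := fun C : ℕ => 2 ^ (2 * C + 2) - 2) ?_ ?_
  · intro i j hij
    have : ∀ m n : ℕ, m < n → 2 ^ (2 * m + 2) - 2 < 2 ^ (2 * n + 2) - 2 := by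
      intro m n hmn
      have h1 : 2 ^ (2 * m + 2) < 2 ^ (2 * n + 2) := Nat.pow_lt_pow_right (by norm_num) (by omega)
      have h2 : 2 ≤ 2 ^ (2 * m + 2) := by
        calc 2 = 2 ^ 1 := rfl
        _ ≤ 2 ^ (2 * m + 2) := Nat.pow_le_pow_right (by norm_num) (by omega)
      omega
    rcases lt_trichotomy i j with h | h | h
    · exact absurd hij (Nat.ne_of_lt (this i j h))
    · exact h
    · exact absurd hij.symm (Nat.ne_of_lt (this j i h))
  · intro C
    exact pB_block_mem

def aSeq : ℕ → ℕ := Nat.nth pA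
def bSeq : ℕ → ℕ := Nat.nth pB

lemma aSeq_mono : StrictMono aSeq := Nat.nth_strictMono pA_infinite
lemma bSeq_mono : StrictMono bSeq := Nat.nth_strictMono pB_infinite

/-- generic gap extraction -/
lemma nth_gap {p : ℕ → Prop} [DecidablePred p] (hinf : (setOf p).Infinite) {k : ℕ}
    (hk : 1 ≤ k) (hx : p (2 ^ k - 2))
    (hblock : ∀ m, 2 ^ k - 2 < m → m + 1 < 2 ^ (k + 1) → ¬ p m) :
    ∃ n, Nat.nth p n + 2 ^ k ≤ Nat.nth p (n + 1) := by
  refine ⟨Nat.count p (2 ^ k - 2), ?_⟩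
  have h1 : Nat.nth p (Nat.count p (2 ^ k - 2)) = 2 ^ k - 2 := Nat.nth_count hx
  set n := Nat.count p (2 ^ k - 2) with hn
  have h2 : Nat.nth p n < Nat.nth p (n + 1) := (Nat.nth_lt_nth hinf).mpr (by omega)
  have h3 : p (Nat.nth p (n + 1)) := Nat.nth_mem_of_infinite hinf _
  by_contra hcon
  push_neg at hcon
  have hpk : 2 ≤ 2 ^ k := by
    calc 2 = 2 ^ 1 := rfl
    _ ≤ 2 ^ k := Nat.pow_le_pow_right (by norm_num) hk
  have hpk2 : 2 ^ (k + 1) = 2 * 2 ^ k := by rw [pow_succ]; ring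
  exact hblock (Nat.nth p (n + 1)) (by omega) (by omega) h3

lemma aSeq_gap (C : ℕ) : ∃ n, aSeq n + C ≤ aSeq (n + 1) := by
  unfold aSeq
  obtain ⟨n, hn⟩ := nth_gap pA_infinite (k := 2 * C + 1) (by omega) pA_block_mem
    (fun m h1 h2 hp => by
      have hlog : Nat.log 2 (m + 1) = 2 * C + 1 := log_block (by omega) h1 h2
      unfold pA at hp
      rw [hlog] at hp
      simp [Nat.even_add_one, parity_simps] at hp)
  have hn' : Nat.nth pA n + 2 ^ (2 * C + 1) ≤ Nat.nth pA (n + 1) := hn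
  refine ⟨n, hn'.trans' ?_⟩
  have : C ≤ 2 ^ (2 * C + 1) := by
    calc C ≤ 2 * C + 1 := by omega
    _ ≤ 2 ^ (2 * C + 1) := Nat.le_of_lt Nat.lt_two_pow_self
  omega

lemma bSeq_gap (C : ℕ) : ∃ n, bSeq n + C ≤ bSeq (n + 1) := by
  unfold bSeq
  obtain ⟨n, hn⟩ := nth_gap pB_infinite (k := 2 * C + 2) (by omega) pB_block_mem
    (fun m h1 h2 hp => by
      have hlog : Nat.log 2 (m + 1) = 2 * C + 2 := log_block (by omega) h1 h2
      unfold pB pA at hp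
      rw [hlog] at hp
      exact hp ⟨C + 1, by ring⟩)
  have hn' : Nat.nth pB n + 2 ^ (2 * C + 2) ≤ Nat.nth pB (n + 1) := hn
  refine ⟨n, hn'.trans' ?_⟩
  have : C ≤ 2 ^ (2 * C + 2) := by
    calc C ≤ 2 * C + 2 := by omega
    _ ≤ 2 ^ (2 * C + 2) := Nat.le_of_lt Nat.lt_two_pow_self
  omega

/-! exponential sequences -/

def expSeq (c : ℕ → ℕ) : ℕ → ℝ := fun n => (3 : ℝ)⁻¹ ^ (c n + 1)

lemma expSeq_pos (c : ℕ → ℕ) (n : ℕ) : 0 < expSeq c n := by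
  unfold expSeq; positivity

lemma expSeq_anti {c : ℕ → ℕ} (hc : Monotone c) {m n : ℕ} (h : m ≤ n) :
    expSeq c n ≤ expSeq c m :=
  pow_le_pow_of_le_one (by norm_num) (by norm_num) (by have := hc h; omega)

lemma expSeq_shrinking {c : ℕ → ℕ} (hc : StrictMono c) : IsShrinking (expSeq c) := by
  refine ⟨expSeq_pos c, fun m n h => expSeq_anti hc.monotone h, ?_⟩
  apply squeeze_zero (fun n => (expSeq_pos c n).le)
    (g := fun n => (3 : ℝ)⁻¹ ^ n)
  · intro n
    exact pow_le_pow_of_le_one (by norm_num) (by norm_num)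
      (by have := hc.le_apply (x := n); omega)
  · exact tendsto_pow_atTop_nhds_zero_of_lt_one (by norm_num) (by norm_num)

lemma expSeq_step {c : ℕ → ℕ} (hc : StrictMono c) (n : ℕ) :
    3 * expSeq c (n + 1) ≤ expSeq c n := by
  have h1 : expSeq c (n + 1) ≤ (3 : ℝ)⁻¹ ^ (c n + 1 + 1) :=
    pow_le_pow_of_le_one (by norm_num) (by norm_num)
      (by have := hc (show n < n + 1 by omega); omega)
  have h2 : (3 : ℝ) * (3 : ℝ)⁻¹ ^ (c n + 1 + 1) = (3 : ℝ)⁻¹ ^ (c n + 1) := by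
    rw [pow_succ]; field_simp
  calc 3 * expSeq c (n + 1) ≤ 3 * (3 : ℝ)⁻¹ ^ (c n + 1 + 1) := by linarith
  _ = expSeq c n := h2

lemma expSeq_gapcond {c : ℕ → ℕ} (hc : StrictMono c)
    (hgap : ∀ C : ℕ, ∃ n, c n + C ≤ c (n + 1)) :
    ∀ ε : ℝ, 0 < ε → ∃ n, expSeq c (n + 1) < ε * expSeq c n := by
  intro ε hε
  obtain ⟨C, hC⟩ := exists_pow_lt_of_lt_one hε (show (3 : ℝ)⁻¹ < 1 by norm_num)
  obtain ⟨n, hn⟩ := hgap C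
  refine ⟨n, ?_⟩
  have h1 : expSeq c (n + 1) ≤ (3 : ℝ)⁻¹ ^ (c n + 1 + C) :=
    pow_le_pow_of_le_one (by norm_num) (by norm_num) (by omega)
  have h2 : (3 : ℝ)⁻¹ ^ (c n + 1 + C) = (3 : ℝ)⁻¹ ^ C * expSeq c n := by
    rw [pow_add]; unfold expSeq; ring
  have h3 : (3 : ℝ)⁻¹ ^ C * expSeq c n < ε * expSeq c n :=
    mul_lt_mul_of_pos_right hC (expSeq_pos c n)
  linarith

end S17
namespace S17

def tf (z : ℕ → Bool) (i : ℕ) : ℝ := 2 * (if z i then (1 : ℝ) else 0) / 3 ^ (i + 1)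

lemma cantorT_eq_tsum (z : ℕ → Bool) : cantorT z = ∑' i, tf z i := rfl

lemma tf_nonneg (z : ℕ → Bool) (i : ℕ) : 0 ≤ tf z i := by
  unfold tf; positivity

lemma tf_le (z : ℕ → Bool) (i : ℕ) : tf z i ≤ 2 * (3 : ℝ)⁻¹ ^ (i + 1) := by
  unfold tf
  rw [div_eq_mul_inv, ← inv_pow]
  have : (if z i then (1:ℝ) else 0) ≤ 1 := by split <;> norm_num
  have h2 : (0:ℝ) < (3:ℝ)⁻¹ ^ (i+1) := by positivity
  nlinarith

lemma summable_geom_aux : Summable (fun i : ℕ => 2 * (3 : ℝ)⁻¹ ^ (i + 1)) := by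
  apply Summable.mul_left
  exact ((summable_geometric_of_lt_one (by norm_num) (by norm_num)).comp_injective
    (add_left_injective 1))

lemma summable_tf (z : ℕ → Bool) : Summable (tf z) := by
  apply Summable.of_nonneg_of_le (tf_nonneg z) (tf_le z) summable_geom_aux

lemma tail_sum (k : ℕ) : ∑' i : ℕ, 2 * (3 : ℝ)⁻¹ ^ (i + k + 1) = 3 * (3 : ℝ)⁻¹ ^ (k + 1) := by
  have h1 : ∀ i : ℕ, 2 * (3 : ℝ)⁻¹ ^ (i + k + 1) = (3 : ℝ)⁻¹ ^ i * (2 * (3 : ℝ)⁻¹ ^ (k + 1)) := by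
    intro i
    rw [show i + k + 1 = i + (k + 1) by omega, pow_add]
    ring
  calc ∑' i : ℕ, 2 * (3 : ℝ)⁻¹ ^ (i + k + 1)
      = ∑' i : ℕ, (3 : ℝ)⁻¹ ^ i * (2 * (3 : ℝ)⁻¹ ^ (k + 1)) := by
        congr 1; ext i; exact h1 i
    _ = (∑' i : ℕ, (3 : ℝ)⁻¹ ^ i) * (2 * (3 : ℝ)⁻¹ ^ (k + 1)) := tsum_mul_right
    _ = (1 - (3:ℝ)⁻¹)⁻¹ * (2 * (3 : ℝ)⁻¹ ^ (k + 1)) := by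
        rw [tsum_geometric_of_lt_one (by norm_num) (by norm_num)]
    _ = 3 * (3 : ℝ)⁻¹ ^ (k + 1) := by norm_num; ring

lemma cantorT_nonneg (z : ℕ → Bool) : 0 ≤ cantorT z :=
  tsum_nonneg (tf_nonneg z)

lemma cantorT_le_one (z : ℕ → Bool) : cantorT z ≤ 1 := by
  rw [cantorT_eq_tsum]
  have h1 : ∑' i, tf z i ≤ ∑' i : ℕ, 2 * (3 : ℝ)⁻¹ ^ (i + 1) :=
    Summable.tsum_le_tsum (tf_le z) (summable_tf z) summable_geom_aux
  have h2 : ∑' i : ℕ, 2 * (3 : ℝ)⁻¹ ^ (i + 1) = 1 := by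
    have := tail_sum 0
    simp only [Nat.add_zero] at this
    rw [this]; norm_num
  linarith

/-- T decomposition: `T z = tf z 0 + T (shift z) / 3`. -/
lemma cantorT_shift (z : ℕ → Bool) :
    cantorT z = tf z 0 + cantorT (fun i => z (i + 1)) / 3 := by
  rw [cantorT_eq_tsum, Summable.tsum_eq_zero_add (summable_tf z)]
  congr 1
  have h1 : ∀ i : ℕ, tf z (i + 1) = tf (fun j => z (j + 1)) i / 3 := by
    intro i
    unfold tf
    rw [pow_succ]
    ring
  calc ∑' i, tf z (i + 1) = ∑' i, tf (fun j => z (j + 1)) i / 3 := by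
        congr 1; ext i; exact h1 i
    _ = (∑' i, tf (fun j => z (j + 1)) i) / 3 := tsum_div_const
    _ = cantorT (fun i => z (i + 1)) / 3 := by rw [cantorT_eq_tsum]

lemma cantorT_mem_pre (n : ℕ) : ∀ z : ℕ → Bool, cantorT z ∈ preCantorSet n := by
  induction n with
  | zero =>
    intro z
    exact ⟨cantorT_nonneg z, cantorT_le_one z⟩
  | succ n ih =>
    intro z
    rw [preCantorSet_succ]
    cases hz : z 0 with
    | false =>
      left
      refine ⟨cantorT (fun i => z (i + 1)), ih _, ?_⟩
      rw [cantorT_shift z]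
      unfold tf
      rw [hz]
      norm_num
    | true =>
      right
      refine ⟨cantorT (fun i => z (i + 1)), ih _, ?_⟩
      rw [cantorT_shift z]
      unfold tf
      rw [hz]
      norm_num
      ring

lemma cantorT_mem (z : ℕ → Bool) : cantorT z ∈ cantorSet :=
  Set.mem_iInter.mpr (fun n => cantorT_mem_pre n z)

/-- bi-Lipschitz estimates for T. -/
lemma cantorT_dist {z w : ℕ → Bool} (hne : z ≠ w) :
    (3 : ℝ)⁻¹ ^ (seqV z w + 1) ≤ |cantorT z - cantorT w| ∧
      |cantorT z - cantorT w| ≤ 3 * (3 : ℝ)⁻¹ ^ (seqV z w + 1) := by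
  set v := seqV z w with hv
  set B := (3 : ℝ)⁻¹ ^ (v + 1) with hB
  have hBpos : 0 < B := by positivity
  have hsum : Summable (fun i => tf z i - tf w i) := (summable_tf z).sub (summable_tf w)
  have hTT : cantorT z - cantorT w = ∑' i, (tf z i - tf w i) := by
    rw [cantorT_eq_tsum, cantorT_eq_tsum]
    exact (Summable.tsum_sub (summable_tf z) (summable_tf w)).symm
  have hsplit := (Summable.sum_add_tsum_nat_add (f := fun i => tf z i - tf w i) (v + 1) hsum).symm
  -- head sum equals the single term at v
  have hhead : ∑ i ∈ Finset.range (v + 1), (tf z i - tf w i) = tf z v - tf w v := by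
    apply Finset.sum_eq_single_of_mem v (Finset.self_mem_range_succ v)
    intro i hi hine
    have hilt : i < v := by
      have := Finset.mem_range.mp hi
      omega
    have : z i = w i := seqV_min hilt
    unfold tf
    rw [this]
    ring
  have hvne : z v ≠ w v := seqV_spec hne
  have hBval : B = 1 / 3 ^ (v + 1) := by rw [hB, inv_pow]; ring
  have hheadabs : |tf z v - tf w v| = 2 * B := by
    have h1 : tf z v - tf w v = 2 / 3 ^ (v+1) ∨ tf z v - tf w v = -(2 / 3 ^ (v+1)) := by
      unfold tf
      cases hzz : z v <;> cases hww : w v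
      · exact absurd (hzz.trans hww.symm) hvne
      · right; norm_num
      · left; norm_num
      · exact absurd (hzz.trans hww.symm) hvne
    have h2 : (0:ℝ) < 2 / 3 ^ (v+1) := by positivity
    rcases h1 with h | h <;> rw [h]
    · rw [abs_of_nonneg h2.le, hBval]; ring
    · rw [abs_neg, abs_of_nonneg h2.le, hBval]; ring
  set t := ∑' i, (tf z (i + (v + 1)) - tf w (i + (v + 1))) with ht
  have hgeomtail : Summable (fun i : ℕ => 2 * (3 : ℝ)⁻¹ ^ (i + (v + 1) + 1)) := by
    have h := summable_geom_aux.comp_injective (add_left_injective (v + 1))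
    exact h.congr (fun i => rfl)
  have habs_le : ∀ i : ℕ,
      ‖tf z (i + (v + 1)) - tf w (i + (v + 1))‖ ≤ 2 * (3 : ℝ)⁻¹ ^ (i + (v + 1) + 1) := by
    intro i
    rw [Real.norm_eq_abs, abs_sub_le_iff]
    constructor
    · have := tf_le z (i + (v+1)); have := tf_nonneg w (i + (v+1)); linarith
    · have := tf_le w (i + (v+1)); have := tf_nonneg z (i + (v+1)); linarith
  have hnormsum : Summable (fun i : ℕ => ‖tf z (i + (v + 1)) - tf w (i + (v + 1))‖) :=
    Summable.of_nonneg_of_le (fun i => norm_nonneg _) habs_le hgeomtail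
  have htail : |t| ≤ B := by
    have h1 : |t| ≤ ∑' i : ℕ, ‖tf z (i + (v + 1)) - tf w (i + (v + 1))‖ := by
      rw [ht, ← Real.norm_eq_abs]
      exact norm_tsum_le_tsum_norm hnormsum
    have h2 : ∑' i : ℕ, ‖tf z (i + (v + 1)) - tf w (i + (v + 1))‖
        ≤ ∑' i : ℕ, 2 * (3 : ℝ)⁻¹ ^ (i + (v + 1) + 1) :=
      Summable.tsum_le_tsum habs_le hnormsum hgeomtail
    have h3 : ∑' i : ℕ, 2 * (3 : ℝ)⁻¹ ^ (i + (v + 1) + 1) = 3 * (3:ℝ)⁻¹ ^ (v + 1 + 1) :=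
      tail_sum (v + 1)
    have h4 : 3 * (3:ℝ)⁻¹ ^ (v + 1 + 1) = B := by
      rw [hB, pow_succ]
      have h5 : (3:ℝ)⁻¹ ^ (v + 1) * 3⁻¹ * 3 = (3:ℝ)⁻¹ ^ (v + 1) := by
        rw [mul_assoc, inv_mul_cancel₀ (by norm_num : (3:ℝ) ≠ 0), mul_one]
      linarith
    linarith
  have hdecomp : cantorT z - cantorT w = (tf z v - tf w v) + t := by
    rw [hTT, hsplit, hhead]
  constructor
  · -- lower bound
    have h4 : |tf z v - tf w v| ≤ |cantorT z - cantorT w| + |t| := by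
      have : tf z v - tf w v = (cantorT z - cantorT w) + (-t) := by rw [hdecomp]; ring
      rw [this]
      exact (abs_add_le _ _).trans (by rw [abs_neg])
    rw [hheadabs] at h4
    linarith
  · rw [hdecomp]
    refine (abs_add_le _ _).trans ?_
    rw [hheadabs]
    linarith

end S17
namespace S17

lemma preCantorSet_subset_unit (n : ℕ) : preCantorSet n ⊆ Set.Icc 0 1 := by
  induction n with
  | zero => exact subset_rfl
  | succ n ih =>
    rw [preCantorSet_succ]
    rintro y (⟨t, ht, rfl⟩ | ⟨t, ht, rfl⟩)
    · obtain ⟨h0, h1⟩ := ih ht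
      constructor <;> simp <;> linarith
    · obtain ⟨h0, h1⟩ := ih ht
      constructor <;> simp <;> linarith

lemma cantorSet_cases {y : ℝ} (hy : y ∈ cantorSet) :
    (y ≤ 1/3 ∧ 3 * y ∈ cantorSet) ∨ (2/3 ≤ y ∧ 3 * y - 2 ∈ cantorSet) := by
  have hP : ∀ n, y ∈ preCantorSet n := Set.mem_iInter.mp hy
  have h1 := hP 1
  rw [preCantorSet_succ] at h1
  rcases h1 with ⟨t, ht, he⟩ | ⟨t, ht, he⟩
  · have he' : t / 3 = y := he
    obtain ⟨ht0, ht1⟩ := preCantorSet_subset_unit 0 ht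
    left
    have hy13 : y ≤ 1/3 := by rw [← he']; linarith
    refine ⟨hy13, ?_⟩
    rw [cantorSet, Set.mem_iInter]
    intro n
    have h2 := hP (n + 1)
    rw [preCantorSet_succ] at h2
    rcases h2 with ⟨s, hs, he2⟩ | ⟨s, hs, he2⟩
    · have he2' : s / 3 = y := he2
      have hs3 : 3 * y = s := by linarith
      rwa [hs3]
    · have he2' : (2 + s) / 3 = y := he2
      obtain ⟨hs0, hs1⟩ := preCantorSet_subset_unit n hs
      have : (2:ℝ)/3 ≤ y := by rw [← he2']; linarith
      exact (by linarith : False).elim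
  · have he' : (2 + t) / 3 = y := he
    obtain ⟨ht0, ht1⟩ := preCantorSet_subset_unit 0 ht
    right
    have hy23 : 2/3 ≤ y := by rw [← he']; linarith
    refine ⟨hy23, ?_⟩
    rw [cantorSet, Set.mem_iInter]
    intro n
    have h2 := hP (n + 1)
    rw [preCantorSet_succ] at h2
    rcases h2 with ⟨s, hs, he2⟩ | ⟨s, hs, he2⟩
    · have he2' : s / 3 = y := he2
      obtain ⟨hs0, hs1⟩ := preCantorSet_subset_unit n hs
      have : y ≤ 1/3 := by rw [← he2']; linarith
      exact (by linarith : False).elim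
    · have he2' : (2 + s) / 3 = y := he2
      have hs3 : 3 * y - 2 = s := by linarith
      rwa [hs3]

open Classical in
/-- The expansion dynamics on the Cantor set. -/
def cantorF (y : ℝ) : ℕ → ℝ
  | 0 => y
  | n + 1 => if 1/2 ≤ cantorF y n then 3 * cantorF y n - 2 else 3 * cantorF y n

open Classical in
def cantorZ (y : ℝ) : ℕ → Bool := fun n => decide (1/2 ≤ cantorF y n)

lemma cantorF_mem {y : ℝ} (hy : y ∈ cantorSet) : ∀ n, cantorF y n ∈ cantorSet := by
  intro n
  induction n with
  | zero => exact hy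
  | succ n ih =>
    rcases cantorSet_cases ih with ⟨h1, h2⟩ | ⟨h1, h2⟩
    · have hlt : ¬ (1/2 ≤ cantorF y n) := by linarith
      rw [show cantorF y (n+1) = if 1/2 ≤ cantorF y n then 3 * cantorF y n - 2
            else 3 * cantorF y n from rfl, if_neg hlt]
      exact h2
    · have hge : 1/2 ≤ cantorF y n := by linarith
      rw [show cantorF y (n+1) = if 1/2 ≤ cantorF y n then 3 * cantorF y n - 2
            else 3 * cantorF y n from rfl, if_pos hge]
      exact h2

lemma cantorF_expand {y : ℝ} (hy : y ∈ cantorSet) :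
    ∀ n, y = (∑ i ∈ Finset.range n, tf (cantorZ y) i) + cantorF y n / 3 ^ n := by
  intro n
  induction n with
  | zero => simp [cantorF]
  | succ n ih =>
    rw [Finset.sum_range_succ]
    have key : cantorF y n / 3 ^ n = tf (cantorZ y) n + cantorF y (n+1) / 3 ^ (n+1) := by
      unfold tf cantorZ
      rw [show cantorF y (n+1) = if 1/2 ≤ cantorF y n then 3 * cantorF y n - 2
            else 3 * cantorF y n from rfl]
      by_cases h : 1/2 ≤ cantorF y n
      · rw [if_pos h, if_pos (by simpa using h)]
        rw [pow_succ]
        have h3 : (3:ℝ) ^ n ≠ 0 := by positivity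
        field_simp
        ring
      · rw [if_neg h, if_neg (by simpa using h)]
        rw [pow_succ]
        have h3 : (3:ℝ) ^ n ≠ 0 := by positivity
        field_simp
        ring
    linarith [ih, key]

lemma cantorT_surj {y : ℝ} (hy : y ∈ cantorSet) : cantorT (cantorZ y) = y := by
  have hbound : ∀ n : ℕ, |cantorT (cantorZ y) - y| ≤ 2 * (3:ℝ)⁻¹ ^ n := by
    intro n
    have hid := cantorF_expand hy n
    have hF := cantorSet_subset_unitInterval (cantorF_mem hy n)
    obtain ⟨hF0, hF1⟩ := hF
    -- tail of T
    have hsplit := (Summable.sum_add_tsum_nat_add (f := tf (cantorZ y)) n (summable_tf _)).symm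
    have htail0 : 0 ≤ ∑' i, tf (cantorZ y) (i + n) := tsum_nonneg (fun i => tf_nonneg _ _)
    have hgeomtail : Summable (fun i : ℕ => 2 * (3 : ℝ)⁻¹ ^ (i + n + 1)) := by
      have h := summable_geom_aux.comp_injective (add_left_injective n)
      exact h.congr (fun i => rfl)
    have htail1 : ∑' i, tf (cantorZ y) (i + n) ≤ 3 * (3:ℝ)⁻¹ ^ (n + 1) := by
      rw [← tail_sum n]
      exact Summable.tsum_le_tsum (fun i => tf_le _ _)
        ((summable_tf _).comp_injective (add_left_injective n)) hgeomtail
    have h31 : 3 * (3:ℝ)⁻¹ ^ (n + 1) = (3:ℝ)⁻¹ ^ n := by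
      rw [pow_succ, mul_comm ((3:ℝ)⁻¹ ^ n) _, ← mul_assoc]
      norm_num
    have hTval : cantorT (cantorZ y) - y
        = (∑' i, tf (cantorZ y) (i + n)) - cantorF y n / 3 ^ n := by
      have h5 : cantorT (cantorZ y)
          = (∑ i ∈ Finset.range n, tf (cantorZ y) i) + ∑' i, tf (cantorZ y) (i + n) := by
        rw [cantorT_eq_tsum, hsplit]
      linarith [hid, h5]
    have hpow : cantorF y n / 3 ^ n ≤ (3:ℝ)⁻¹ ^ n := by
      rw [inv_pow]
      have h3 : (0:ℝ) < 3 ^ n := by positivity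
      rw [div_le_iff₀ h3]
      calc cantorF y n ≤ 1 := hF1
        _ = (3 ^ n)⁻¹ * 3 ^ n := by field_simp
    have hpow0 : 0 ≤ cantorF y n / 3 ^ n := by positivity
    rw [hTval, abs_sub_le_iff]
    constructor
    · have : ∑' i, tf (cantorZ y) (i + n) ≤ (3:ℝ)⁻¹ ^ n := by linarith
      have hp : (0:ℝ) ≤ (3:ℝ)⁻¹ ^ n := by positivity
      linarith
    · have hp : (0:ℝ) ≤ (3:ℝ)⁻¹ ^ n := by positivity
      linarith
  have hlim : Filter.Tendsto (fun n : ℕ => 2 * (3:ℝ)⁻¹ ^ n) Filter.atTop (nhds 0) := by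
    have := (tendsto_pow_atTop_nhds_zero_of_lt_one
      (show (0:ℝ) ≤ 3⁻¹ by norm_num) (by norm_num)).const_mul (2:ℝ)
    simpa using this
  have : |cantorT (cantorZ y) - y| ≤ 0 :=
    ge_of_tendsto hlim (Filter.Eventually.of_forall hbound)
  have := abs_nonneg (cantorT (cantorZ y) - y)
  have heq : |cantorT (cantorZ y) - y| = 0 := le_antisymm ‹_› ‹_›
  have := abs_eq_zero.mp heq
  linarith

lemma cantorT_injective : Function.Injective cantorT := by
  intro z w h
  by_contra hne
  have ⟨hlow, _⟩ := cantorT_dist hne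
  rw [h, sub_self, abs_zero] at hlow
  have : (0:ℝ) < (3:ℝ)⁻¹ ^ (seqV z w + 1) := by positivity
  linarith

end S17
namespace S17

def mergeFn (p : (ℕ → Bool) × (ℕ → Bool)) : ℕ → Bool :=
  fun m => if pA m then p.1 (Nat.count pA m) else p.2 (Nat.count pB m)

def splitFn (z : ℕ → Bool) : (ℕ → Bool) × (ℕ → Bool) :=
  (fun n => z (aSeq n), fun n => z (bSeq n))

lemma pA_aSeq (n : ℕ) : pA (aSeq n) := Nat.nth_mem_of_infinite pA_infinite n
lemma pB_bSeq (n : ℕ) : pB (bSeq n) := Nat.nth_mem_of_infinite pB_infinite n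
lemma count_aSeq (n : ℕ) : Nat.count pA (aSeq n) = n := Nat.count_nth_of_infinite pA_infinite n
lemma count_bSeq (n : ℕ) : Nat.count pB (bSeq n) = n := Nat.count_nth_of_infinite pB_infinite n

lemma merge_split (z : ℕ → Bool) : mergeFn (splitFn z) = z := by
  funext m
  unfold mergeFn splitFn
  by_cases h : pA m
  · rw [if_pos h]
    simp only
    rw [show aSeq (Nat.count pA m) = m from Nat.nth_count h]
  · rw [if_neg h]
    simp only
    rw [show bSeq (Nat.count pB m) = m from Nat.nth_count h]

lemma split_merge (p : (ℕ → Bool) × (ℕ → Bool)) : splitFn (mergeFn p) = p := by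
  unfold splitFn mergeFn
  ext n
  · simp only [if_pos (pA_aSeq n), count_aSeq]
  · simp only [if_neg (pB_bSeq n), count_bSeq]

lemma mergeFn_injective : Function.Injective mergeFn := by
  intro p q h
  rw [← split_merge p, h, split_merge q]

lemma merge_ne_at_a {p q : (ℕ → Bool) × (ℕ → Bool)} {n : ℕ} (h : p.1 n ≠ q.1 n) :
    mergeFn p (aSeq n) ≠ mergeFn q (aSeq n) := by
  unfold mergeFn
  rw [if_pos (pA_aSeq n), if_pos (pA_aSeq n), count_aSeq]
  exact h

lemma merge_ne_at_b {p q : (ℕ → Bool) × (ℕ → Bool)} {n : ℕ} (h : p.2 n ≠ q.2 n) :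
    mergeFn p (bSeq n) ≠ mergeFn q (bSeq n) := by
  unfold mergeFn
  rw [if_neg (pB_bSeq n), if_neg (pB_bSeq n), count_bSeq]
  exact h

lemma merge_ne_elim {p q : (ℕ → Bool) × (ℕ → Bool)} {m : ℕ}
    (h : mergeFn p m ≠ mergeFn q m) :
    (pA m ∧ aSeq (Nat.count pA m) = m ∧ p.1 (Nat.count pA m) ≠ q.1 (Nat.count pA m)) ∨
      (¬ pA m ∧ bSeq (Nat.count pB m) = m ∧ p.2 (Nat.count pB m) ≠ q.2 (Nat.count pB m)) := by
  unfold mergeFn at h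
  by_cases hm : pA m
  · rw [if_pos hm, if_pos hm] at h
    exact Or.inl ⟨hm, Nat.nth_count hm, h⟩
  · rw [if_neg hm, if_neg hm] at h
    exact Or.inr ⟨hm, Nat.nth_count hm, h⟩

/-- x-parts differ, y-parts equal. -/
lemma seqV_merge_x {p q : (ℕ → Bool) × (ℕ → Bool)} (hx : p.1 ≠ q.1) (hy : p.2 = q.2) :
    seqV (mergeFn p) (mergeFn q) = aSeq (seqV p.1 q.1) := by
  have hmne : mergeFn p (aSeq (seqV p.1 q.1)) ≠ mergeFn q (aSeq (seqV p.1 q.1)) :=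
    merge_ne_at_a (seqV_spec hx)
  have hne : mergeFn p ≠ mergeFn q := Function.ne_iff.mpr ⟨_, hmne⟩
  apply le_antisymm
  · exact seqV_le hmne
  · have hmem := seqV_spec hne
    rcases merge_ne_elim hmem with ⟨hm, heq, hdiff⟩ | ⟨hm, heq, hdiff⟩
    · have h1 : seqV p.1 q.1 ≤ Nat.count pA (seqV (mergeFn p) (mergeFn q)) := seqV_le hdiff
      calc aSeq (seqV p.1 q.1) ≤ aSeq (Nat.count pA (seqV (mergeFn p) (mergeFn q))) :=
            aSeq_mono.monotone h1
        _ = _ := heq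
    · exact absurd (by rw [hy] at hdiff; exact hdiff) (not_ne_iff.mpr rfl)

lemma seqV_merge_y {p q : (ℕ → Bool) × (ℕ → Bool)} (hx : p.1 = q.1) (hy : p.2 ≠ q.2) :
    seqV (mergeFn p) (mergeFn q) = bSeq (seqV p.2 q.2) := by
  have hmne : mergeFn p (bSeq (seqV p.2 q.2)) ≠ mergeFn q (bSeq (seqV p.2 q.2)) :=
    merge_ne_at_b (seqV_spec hy)
  have hne : mergeFn p ≠ mergeFn q := Function.ne_iff.mpr ⟨_, hmne⟩
  apply le_antisymm
  · exact seqV_le hmne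
  · have hmem := seqV_spec hne
    rcases merge_ne_elim hmem with ⟨hm, heq, hdiff⟩ | ⟨hm, heq, hdiff⟩
    · exact absurd (by rw [hx] at hdiff; exact hdiff) (not_ne_iff.mpr rfl)
    · have h1 : seqV p.2 q.2 ≤ Nat.count pB (seqV (mergeFn p) (mergeFn q)) := seqV_le hdiff
      calc bSeq (seqV p.2 q.2) ≤ bSeq (Nat.count pB (seqV (mergeFn p) (mergeFn q))) :=
            bSeq_mono.monotone h1
        _ = _ := heq

lemma seqV_merge_xy {p q : (ℕ → Bool) × (ℕ → Bool)} (hx : p.1 ≠ q.1) (hy : p.2 ≠ q.2) :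
    seqV (mergeFn p) (mergeFn q) = min (aSeq (seqV p.1 q.1)) (bSeq (seqV p.2 q.2)) := by
  have hmnea : mergeFn p (aSeq (seqV p.1 q.1)) ≠ mergeFn q (aSeq (seqV p.1 q.1)) :=
    merge_ne_at_a (seqV_spec hx)
  have hmneb : mergeFn p (bSeq (seqV p.2 q.2)) ≠ mergeFn q (bSeq (seqV p.2 q.2)) :=
    merge_ne_at_b (seqV_spec hy)
  have hne : mergeFn p ≠ mergeFn q := Function.ne_iff.mpr ⟨_, hmnea⟩
  apply le_antisymm
  · exact le_min (seqV_le hmnea) (seqV_le hmneb)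
  · have hmem := seqV_spec hne
    rcases merge_ne_elim hmem with ⟨hm, heq, hdiff⟩ | ⟨hm, heq, hdiff⟩
    · refine (min_le_left _ _).trans ?_
      have h1 : seqV p.1 q.1 ≤ Nat.count pA (seqV (mergeFn p) (mergeFn q)) := seqV_le hdiff
      calc aSeq (seqV p.1 q.1) ≤ aSeq (Nat.count pA (seqV (mergeFn p) (mergeFn q))) :=
            aSeq_mono.monotone h1
        _ = _ := heq
    · refine (min_le_right _ _).trans ?_
      have h1 : seqV p.2 q.2 ≤ Nat.count pB (seqV (mergeFn p) (mergeFn q)) := seqV_le hdiff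
      calc bSeq (seqV p.2 q.2) ≤ bSeq (Nat.count pB (seqV (mergeFn p) (mergeFn q))) :=
            bSeq_mono.monotone h1
        _ = _ := heq

/-- The central distance formula: the sup-product distance equals the standard ultrametric
of the merged sequences. -/
lemma prod_dist_formula (p q : (ℕ → Bool) × (ℕ → Bool)) (hne : p ≠ q) :
    max (seqDist (expSeq aSeq) p.1 q.1) (seqDist (expSeq bSeq) p.2 q.2)
      = (3 : ℝ)⁻¹ ^ (seqV (mergeFn p) (mergeFn q) + 1) := by
  have hexp : ∀ (c : ℕ → ℕ) (n : ℕ), expSeq c n = (3 : ℝ)⁻¹ ^ (c n + 1) := fun _ _ => rfl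
  rcases eq_or_ne p.1 q.1 with hx | hx
  · rcases eq_or_ne p.2 q.2 with hy | hy
    · exact absurd (Prod.ext hx hy) hne
    · rw [hx, seqDist_self, seqDist_of_ne _ hy, seqV_merge_y hx hy, hexp]
      rw [max_eq_right (by positivity)]
  · rcases eq_or_ne p.2 q.2 with hy | hy
    · rw [hy, seqDist_self, seqDist_of_ne _ hx, seqV_merge_x hx hy, hexp]
      rw [max_eq_left (by positivity)]
    · rw [seqDist_of_ne _ hx, seqDist_of_ne _ hy, seqV_merge_xy hx hy, hexp, hexp]
      rcases min_cases (aSeq (seqV p.1 q.1)) (bSeq (seqV p.2 q.2)) with ⟨he, hle⟩ | ⟨he, hle⟩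
      · rw [he, max_eq_left]
        exact pow_le_pow_of_le_one (by norm_num) (by norm_num) (by omega)
      · rw [he, max_eq_right]
        exact pow_le_pow_of_le_one (by norm_num) (by norm_num) (by omega)

end S17
namespace S17

def etaH : Homeomorph (Set.Ici (0:ℝ)) (Set.Ici (0:ℝ)) where
  toFun t := ⟨3 * t.1, by
    have := t.2
    simp only [Set.mem_Ici] at this ⊢
    linarith⟩
  invFun t := ⟨t.1 / 3, by
    have := t.2
    simp only [Set.mem_Ici] at this ⊢
    linarith⟩
  left_inv t := Subtype.ext (by simp only; ring)
  right_inv t := Subtype.ext (by simp only; ring)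
  continuous_toFun := Continuous.subtype_mk (continuous_const.mul continuous_subtype_val)
    (fun t => by have := t.2; simp only [Set.mem_Ici, Pi.mul_apply] at this ⊢; linarith)
  continuous_invFun := Continuous.subtype_mk (continuous_subtype_val.div_const 3)
    (fun t => by have := t.2; simp only [Set.mem_Ici] at this ⊢; linarith)

lemma hasType_A : @HasType (ℕ → Bool)
    (seqMetricSpace (expSeq aSeq) (expSeq_shrinking aSeq_mono)) true true false := by
  refine ⟨iff_of_true ?_ rfl, iff_of_true ?_ rfl, iff_of_false ?_ (by simp)⟩
  · exact seq_isDoubling _ _ (expSeq_step aSeq_mono)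
  · exact seq_isUD _ _
  · exact seq_notUP _ _ (expSeq_gapcond aSeq_mono aSeq_gap)

lemma hasType_B : @HasType (ℕ → Bool)
    (seqMetricSpace (expSeq bSeq) (expSeq_shrinking bSeq_mono)) true true false := by
  refine ⟨iff_of_true ?_ rfl, iff_of_true ?_ rfl, iff_of_false ?_ (by simp)⟩
  · exact seq_isDoubling _ _ (expSeq_step bSeq_mono)
  · exact seq_isUD _ _
  · exact seq_notUP _ _ (expSeq_gapcond bSeq_mono bSeq_gap)

lemma qs_main : QSEquiv ((ℕ → Bool) × (ℕ → Bool)) ↥cantorSet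
    (prodMetric (seqMetricSpace (expSeq aSeq) (expSeq_shrinking aSeq_mono))
      (seqMetricSpace (expSeq bSeq) (expSeq_shrinking bSeq_mono))) inferInstance := by
  letI mX := prodMetric (seqMetricSpace (expSeq aSeq) (expSeq_shrinking aSeq_mono))
      (seqMetricSpace (expSeq bSeq) (expSeq_shrinking bSeq_mono))
  letI mY : MetricSpace ↥cantorSet := inferInstance
  have hdistY : ∀ u v : ↥cantorSet, dist u v = |u.1 - v.1| := fun u v => by
    rw [Subtype.dist_eq, Real.dist_eq]
  have hdistX : ∀ p q : (ℕ → Bool) × (ℕ → Bool),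
      dist p q = max (seqDist (expSeq aSeq) p.1 q.1) (seqDist (expSeq bSeq) p.2 q.2) :=
    fun p q => rfl
  -- the sandwich estimates
  have sandwich : ∀ p q : (ℕ → Bool) × (ℕ → Bool), p ≠ q →
      dist p q ≤ |cantorT (mergeFn p) - cantorT (mergeFn q)| ∧
        |cantorT (mergeFn p) - cantorT (mergeFn q)| ≤ 3 * dist p q := by
    intro p q hne
    have hMne : mergeFn p ≠ mergeFn q := fun h => hne (mergeFn_injective h)
    have hform : dist p q = (3 : ℝ)⁻¹ ^ (seqV (mergeFn p) (mergeFn q) + 1) := by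
      rw [hdistX]
      exact prod_dist_formula p q hne
    obtain ⟨hlow, hup⟩ := cantorT_dist hMne
    rw [hform]
    exact ⟨hlow, hup⟩
  -- the equivalence
  let e : ((ℕ → Bool) × (ℕ → Bool)) ≃ ↥cantorSet :=
    { toFun := fun p => ⟨cantorT (mergeFn p), cantorT_mem _⟩
      invFun := fun y => splitFn (cantorZ y.1)
      left_inv := fun p => by
        have h1 : cantorT (cantorZ (cantorT (mergeFn p))) = cantorT (mergeFn p) :=
          cantorT_surj (cantorT_mem _)
        have h2 : cantorZ (cantorT (mergeFn p)) = mergeFn p := cantorT_injective h1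
        simp only [h2, split_merge]
      right_inv := fun y => Subtype.ext (by
        simp only [merge_split]
        exact cantorT_surj y.2) }
  have heval : ∀ p : (ℕ → Bool) × (ℕ → Bool), (e p).1 = cantorT (mergeFn p) := fun p => rfl
  -- Lipschitz estimates for e and e.symm
  have hLipF : ∀ p q : (ℕ → Bool) × (ℕ → Bool), dist (e p) (e q) ≤ 3 * dist p q := by
    intro p q
    rcases eq_or_ne p q with rfl | hne
    · rw [dist_self, dist_self, mul_zero]
    · rw [hdistY, heval, heval]
      exact (sandwich p q hne).2
  have hLipG : ∀ u v : ↥cantorSet, dist (e.symm u) (e.symm v) ≤ dist u v := by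
    intro u v
    rcases eq_or_ne (e.symm u) (e.symm v) with heq | hne
    · rw [heq, dist_self]
      exact dist_nonneg
    · have h1 := (sandwich _ _ hne).1
      have hu : cantorT (mergeFn (e.symm u)) = u.1 := by
        rw [← heval, Equiv.apply_symm_apply]
      have hv : cantorT (mergeFn (e.symm v)) = v.1 := by
        rw [← heval, Equiv.apply_symm_apply]
      rw [hu, hv] at h1
      rw [hdistY u v]
      exact h1
  refine ⟨@Homeomorph.mk _ _ (metricTopology mX) (metricTopology mY) e ?_ ?_, ?_⟩
  · exact @LipschitzWith.continuous _ _
      (@PseudoMetricSpace.toPseudoEMetricSpace _ mX.toPseudoMetricSpace)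
      (@PseudoMetricSpace.toPseudoEMetricSpace _ mY.toPseudoMetricSpace) 3 _
      (@LipschitzWith.of_dist_le_mul _ _ mX.toPseudoMetricSpace mY.toPseudoMetricSpace 3 _
        (fun p q => by rw [NNReal.coe_ofNat]; exact hLipF p q))
  · exact @LipschitzWith.continuous _ _
      (@PseudoMetricSpace.toPseudoEMetricSpace _ mY.toPseudoMetricSpace)
      (@PseudoMetricSpace.toPseudoEMetricSpace _ mX.toPseudoMetricSpace) 1 _
      (@LipschitzWith.of_dist_le_mul _ _ mY.toPseudoMetricSpace mX.toPseudoMetricSpace 1 _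
        (fun u v => by rw [NNReal.coe_one, one_mul]; exact hLipG u v))
  refine ⟨etaH, ?_⟩
  intro x y z hxy hxz hyz
  show dist (e x) (e y) / dist (e x) (e z) ≤ 3 * (dist x y / dist x z)
  have h1 : dist (e x) (e y) ≤ 3 * dist x y := hLipF x y
  have h2 : dist x z ≤ dist (e x) (e z) := by
    have := (sandwich x z hxz).1
    rw [hdistY, heval, heval]
    exact this
  have h3 : (0:ℝ) < dist x z := dist_pos.mpr hxz
  have h4 : dist (e x) (e y) / dist (e x) (e z) ≤ (3 * dist x y) / dist x z :=
    div_le_div₀ (by positivity) h1 h3 h2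
  calc dist (e x) (e y) / dist (e x) (e z) ≤ (3 * dist x y) / dist x z := h4
    _ = 3 * (dist x y / dist x z) := by ring

end S17

theorem statement_17 :
    ∃ (σ τ : ℕ → ℝ) (hσ : IsShrinking σ) (hτ : IsShrinking τ),
      @HasType (ℕ → Bool) (seqMetricSpace σ hσ) true true false ∧
      @HasType (ℕ → Bool) (seqMetricSpace τ hτ) true true false ∧
      QSEquiv ((ℕ → Bool) × (ℕ → Bool)) ↥cantorSet
        (prodMetric (seqMetricSpace σ hσ) (seqMetricSpace τ hτ)) inferInstance := by
  exact ⟨S17.expSeq S17.aSeq, S17.expSeq S17.bSeq,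
    S17.expSeq_shrinking S17.aSeq_mono, S17.expSeq_shrinking S17.bSeq_mono,
    S17.hasType_A, S17.hasType_B, S17.qs_main⟩
end
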